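/- Nested concavity of the pairwise value function: Fix i ∈ [t], 1 ≤ k_1 < k_2 ≤ K and b ≥ 0, and define Ψ(α,β) := max { α_1 ℓ_{k_1}(ξ̂_i − q_1/α_1) + α_2 ℓ_{k_2}(ξ̂_i − q_2/α_2) : ‖q_1‖ ≤ β_1, ‖q_2‖ ≤ β_2 } for α = (α_1,α_2) in the simplex {α_1 + α_2 = 1, α_1, α_2 ≥ 0} and β = (β_1,β_2) in {β_1 + β_2 = b, β_1, β_2 ≥ 0}. Then (1) for each fixed α, the map β ↦ Ψ(α,β) is concave on {β_1 + β_2 = b, β ≥ 0}, and (2) the map α ↦ max_β Ψ(α,β) is concave on the simplex. -/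

import Mathlib

open MeasureTheory Filter
open scoped ENNReal NNReal BigOperators RealInnerProductSpace

set_option autoImplicit false

noncomputable section

/-- `Vec d` is Euclidean space `ℝ^d`. -/
abbrev Vec (d : ℕ) := EuclideanSpace ℝ (Fin d)


/-- Perspective-type term `α · h(ξ − q/α)`, with the liminf convention
`liminf_{α→0⁺} α · h(ξ − q/α)` at `α = 0`, so that `(α, q) ↦ persp h ξ q α` is the
(jointly concave) perspective of the concave function `h`. -/
def persp {d : ℕ} (h : Vec d → ℝ) (ξ q : Vec d) (α : ℝ) : ℝ :=
  if 0 < α then α * h (ξ - α⁻¹ • q)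
  else liminf (fun a : ℝ => a * h (ξ - a⁻¹ • q)) (nhdsWithin 0 (Set.Ioi 0))

/-- The pairwise value function `Ψ(α, β)` for fixed weight allocation `α` and budget
allocation `β`. -/
def Psi {d : ℕ} (h₁ h₂ : Vec d → ℝ) (ξ : Vec d) (α β : ℝ × ℝ) : ℝ :=
  sSup {v | ∃ q₁ q₂ : Vec d, ‖q₁‖ ≤ β.1 ∧ ‖q₂‖ ≤ β.2 ∧
    v = persp h₁ ξ q₁ α.1 + persp h₂ ξ q₂ α.2}

namespace PerspAux

variable {m : ℕ}

/-- the function whose liminf at `0⁺` defines `persp` at `0`. -/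
def pf (h : Vec m → ℝ) (ξ q : Vec m) : ℝ → ℝ := fun s => s * h (ξ - s⁻¹ • q)

lemma persp_of_pos (h : Vec m → ℝ) (ξ q : Vec m) {α : ℝ} (hα : 0 < α) :
    persp h ξ q α = pf h ξ q α := if_pos hα

lemma persp_zero (h : Vec m → ℝ) (ξ q : Vec m) :
    persp h ξ q 0 = sSup {K : ℝ | ∀ᶠ s in nhdsWithin 0 (Set.Ioi 0), K ≤ pf h ξ q s} := by
  rw [persp, if_neg (lt_irrefl 0)]
  exact liminf_eq

/-- genuineness: the function is eventually bounded below near `0⁺`. -/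
def genuine (h : Vec m → ℝ) (ξ q : Vec m) : Prop :=
  ∃ K : ℝ, ∀ᶠ s in nhdsWithin 0 (Set.Ioi 0), K ≤ pf h ξ q s

variable {h : Vec m → ℝ} (hc : ConcaveOn ℝ Set.univ h) (ξ : Vec m)

include hc in
lemma cont_h : Continuous h := by
  have := hc.continuousOn isOpen_univ
  rwa [continuousOn_univ] at this

include hc in
/-- pointwise concave combination inequality for `pf`.  -/
lemma F1 {a c s t : ℝ} (q q' : Vec m) (ha : 0 ≤ a) (hc' : 0 ≤ c) (hac : a + c = 1)
    (hs : 0 < s) (ht : 0 < t) :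
    a * pf h ξ q s + c * pf h ξ q' t ≤ pf h ξ (a • q + c • q') (a * s + c * t) := by
  have hpos : 0 < a ∨ 0 < c := by
    by_contra hcon
    push_neg at hcon
    nlinarith [hcon.1, hcon.2]
  have hlam0 : 0 < a * s + c * t := by
    rcases hpos with h1 | h1
    · have : 0 < a * s := mul_pos h1 hs
      nlinarith [mul_nonneg hc' ht.le]
    · have : 0 < c * t := mul_pos h1 ht
      nlinarith [mul_nonneg ha hs.le]
  set lam := a * s + c * t with hlam
  have w1nn : 0 ≤ a * s / lam := by positivity
  have w2nn : 0 ≤ c * t / lam := by positivity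
  have wsum : a * s / lam + c * t / lam = 1 := by field_simp; exact hlam.symm
  have hkey := hc.2 (Set.mem_univ (ξ - s⁻¹ • q)) (Set.mem_univ (ξ - t⁻¹ • q')) w1nn w2nn wsum
  have hpt : (a * s / lam) • (ξ - s⁻¹ • q) + (c * t / lam) • (ξ - t⁻¹ • q')
      = ξ - lam⁻¹ • (a • q + c • q') := by
    match_scalars <;> field_simp <;> ring
  rw [hpt] at hkey
  simp only [smul_eq_mul] at hkey
  have hmul := mul_le_mul_of_nonneg_left hkey hlam0.le
  calc a * pf h ξ q s + c * pf h ξ q' t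
      = lam * (a * s / lam * h (ξ - s⁻¹ • q) + c * t / lam * h (ξ - t⁻¹ • q')) := by
        simp only [pf]; field_simp
    _ ≤ lam * h (ξ - lam⁻¹ • (a • q + c • q')) := hmul
    _ = pf h ξ (a • q + c • q') lam := rfl

include hc in
/-- eventual upper bound for `pf` on `(0,1]`. -/
lemma pf_le (q : Vec m) {s : ℝ} (hs : 0 < s) (hs1 : s ≤ 1) :
    pf h ξ q s ≤ h (ξ - q) - h ξ + |h ξ| := by
  have hkey := hc.2 (Set.mem_univ (ξ - s⁻¹ • q)) (Set.mem_univ ξ) hs.le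
    (by linarith : (0:ℝ) ≤ 1 - s) (by ring)
  have hpt : s • (ξ - s⁻¹ • q) + (1 - s) • ξ = ξ - q := by
    match_scalars <;> field_simp <;> ring
  rw [hpt] at hkey
  simp only [smul_eq_mul] at hkey
  have h1 : s * h ξ ≤ |h ξ| := by
    nlinarith [le_abs_self (h ξ), neg_abs_le (h ξ), abs_nonneg (h ξ)]
  unfold pf
  nlinarith [hkey]


/-- bound used for `bddAbove` arguments. -/
def ub (h : Vec m → ℝ) (ξ q : Vec m) : ℝ := max 0 (h (ξ - q) - h ξ + |h ξ|)

include hc in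
lemma eub (q : Vec m) :
    ∀ᶠ s in nhdsWithin 0 (Set.Ioi 0), pf h ξ q s ≤ h (ξ - q) - h ξ + |h ξ| := by
  have hIoo : Set.Ioo (0:ℝ) 1 ∈ nhdsWithin 0 (Set.Ioi 0) :=
    Ioo_mem_nhdsGT one_pos
  filter_upwards [hIoo] with s hs
  exact pf_le hc ξ q hs.1 hs.2.le

include hc in
lemma persp_le (q : Vec m) {α : ℝ} (hα : 0 ≤ α) (hα1 : α ≤ 1) :
    persp h ξ q α ≤ ub h ξ q := by
  rcases hα.eq_or_lt with rfl | hpos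
  · rw [persp_zero]
    refine Real.sSup_le (fun x hx => ?_) (le_max_left _ _)
    have hx' : ∀ᶠ s in nhdsWithin 0 (Set.Ioi 0), x ≤ pf h ξ q s := hx
    obtain ⟨s, hxs, hs⟩ := (hx'.and (eub hc ξ q)).exists
    exact le_trans (le_trans hxs hs) (le_max_right _ _)
  · rw [persp_of_pos h ξ q hpos]
    exact le_trans (pf_le hc ξ q hpos hα1) (le_max_right _ _)

omit hc in
/-- if the liminf is genuine and the function is eventually `≤ B`, the liminf is `≤ B`. -/
lemma persp_zero_le {q : Vec m} (hg : genuine h ξ q) {B : ℝ}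
    (hB : ∀ᶠ s in nhdsWithin 0 (Set.Ioi 0), pf h ξ q s ≤ B) :
    persp h ξ q 0 ≤ B := by
  obtain ⟨K, hK⟩ := hg
  rw [persp_zero]
  refine csSup_le ⟨K, hK⟩ (fun x hx => ?_)
  have hx' : ∀ᶠ s in nhdsWithin 0 (Set.Ioi 0), x ≤ pf h ξ q s := hx
  obtain ⟨s, hxs, hs⟩ := (hx'.and hB).exists
  exact le_trans hxs hs

include hc in
lemma le_persp_zero (q : Vec m) {K : ℝ}
    (hK : ∀ᶠ s in nhdsWithin 0 (Set.Ioi 0), K ≤ pf h ξ q s) :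
    K ≤ persp h ξ q 0 := by
  rw [persp_zero]
  refine le_csSup ⟨h (ξ - q) - h ξ + |h ξ|, fun x hx => ?_⟩ hK
  have hx' : ∀ᶠ s in nhdsWithin 0 (Set.Ioi 0), x ≤ pf h ξ q s := hx
  obtain ⟨s, hxs, hs⟩ := (hx'.and (eub hc ξ q)).exists
  exact le_trans hxs hs

omit hc in
lemma persp_zero_sub_eventually {q : Vec m} (hg : genuine h ξ q) {ε : ℝ} (hε : 0 < ε) :
    ∀ᶠ s in nhdsWithin 0 (Set.Ioi 0), persp h ξ q 0 - ε ≤ pf h ξ q s := by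
  have hne : {K : ℝ | ∀ᶠ s in nhdsWithin 0 (Set.Ioi 0), K ≤ pf h ξ q s}.Nonempty := hg
  have hlt : persp h ξ q 0 - ε <
      sSup {K : ℝ | ∀ᶠ s in nhdsWithin 0 (Set.Ioi 0), K ≤ pf h ξ q s} := by
    rw [persp_zero]; linarith
  obtain ⟨x, hx, hxlt⟩ := exists_lt_of_lt_csSup hne hlt
  have hx' : ∀ᶠ s in nhdsWithin 0 (Set.Ioi 0), x ≤ pf h ξ q s := hx
  filter_upwards [hx'] with s hs
  linarith

omit hc in
/-- repair: replace `q` by a surrogate with the same `persp` value which is genuine at `0`. -/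
lemma repair (q : Vec m) {α : ℝ} (hα : 0 ≤ α) :
    ∃ r : Vec m, ‖r‖ ≤ ‖q‖ ∧ persp h ξ r α = persp h ξ q α ∧
      (α = 0 → genuine h ξ r) := by
  rcases hα.eq_or_lt with rfl | hpos
  · by_cases hg : genuine h ξ q
    · exact ⟨q, le_refl _, rfl, fun _ => hg⟩
    · refine ⟨0, by simp, ?_, fun _ => ?_⟩
      · have hpf0 : pf h ξ (0 : Vec m) = fun s : ℝ => s * h ξ := by
          funext s; simp [pf]
        have htd : Tendsto (pf h ξ (0 : Vec m)) (nhdsWithin 0 (Set.Ioi 0)) (nhds 0) := by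
          rw [hpf0]
          have : Tendsto (fun s : ℝ => s * h ξ) (nhds 0) (nhds (0 * h ξ)) :=
            (continuous_id.mul continuous_const).tendsto 0
          rw [zero_mul] at this
          exact this.mono_left nhdsWithin_le_nhds
        have h1 : persp h ξ (0 : Vec m) 0 = 0 := by
          rw [persp, if_neg (lt_irrefl 0)]
          exact htd.liminf_eq
        have h2 : persp h ξ q 0 = 0 := by
          rw [persp_zero]
          have hemp : {K : ℝ | ∀ᶠ s in nhdsWithin 0 (Set.Ioi 0), K ≤ pf h ξ q s} = ∅ := by
            rw [Set.eq_empty_iff_forall_notMem]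
            exact fun K hK => hg ⟨K, hK⟩
          rw [hemp, Real.sSup_empty]
        rw [h1, h2]
      · have hpf0 : pf h ξ (0 : Vec m) = fun s : ℝ => s * h ξ := by
          funext s; simp [pf]
        refine ⟨-(|h ξ| + 1), ?_⟩
        rw [hpf0]
        have hIoo : Set.Ioo (0:ℝ) 1 ∈ nhdsWithin 0 (Set.Ioi 0) :=
          Ioo_mem_nhdsGT one_pos
        filter_upwards [hIoo] with s hs
        nlinarith [neg_abs_le (h ξ), le_abs_self (h ξ), abs_nonneg (h ξ), hs.1.le, hs.2.le]
  · exact ⟨q, le_refl _, rfl, fun h0 => absurd h0 (ne_of_gt hpos)⟩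


omit hc in
lemma le_of_eps {x y : ℝ} (H : ∀ ε : ℝ, 0 < ε → x ≤ y + ε) : x ≤ y := by
  by_contra hxy
  push_neg at hxy
  have := H ((x - y)/2) (by linarith)
  linarith

include hc in
/-- mixed case: one exponent is `0`, the other positive. -/
lemma perspP_mix {a c α' : ℝ} (q q' : Vec m) (ha : 0 < a) (hc0 : 0 < c) (hac : a + c = 1)
    (hα' : 0 < α') (hg : genuine h ξ q) :
    a * persp h ξ q 0 + c * persp h ξ q' α' ≤ persp h ξ (a • q + c • q') (c * α') := by
  have hcα' : 0 < c * α' := mul_pos hc0 hα'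
  rw [persp_of_pos h ξ q' hα', persp_of_pos h ξ _ hcα']
  set r := a • q + c • q' with hr
  have haff : Tendsto (fun s : ℝ => a * s + c * α') (nhds (0:ℝ)) (nhds (c * α')) := by
    have : Tendsto (fun s : ℝ => a * s + c * α') (nhds (0:ℝ)) (nhds (a * 0 + c * α')) :=
      ((continuous_const.mul continuous_id).add continuous_const).tendsto 0
    simpa using this
  have hG : ContinuousAt (fun t : ℝ => pf h ξ r t) (c * α') := by
    have h1 : ContinuousAt (fun t : ℝ => ξ - t⁻¹ • r) (c * α') :=
      continuousAt_const.sub ((continuousAt_id.inv₀ hcα'.ne').smul continuousAt_const)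
    exact continuousAt_id.mul ((cont_h hc).continuousAt.comp h1)
  have hcont : Tendsto (fun s : ℝ => pf h ξ r (a * s + c * α'))
      (nhdsWithin 0 (Set.Ioi 0)) (nhds (pf h ξ r (c * α'))) :=
    hG.tendsto.comp (haff.mono_left nhdsWithin_le_nhds)
  refine le_of_eps (fun ε hε => ?_)
  have hev1 : ∀ᶠ s in nhdsWithin 0 (Set.Ioi 0),
      pf h ξ r (a * s + c * α') < pf h ξ r (c * α') + ε :=
    hcont.eventually_lt_const (by linarith)
  have hev2 : ∀ᶠ s in nhdsWithin 0 (Set.Ioi 0),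
      pf h ξ q s ≤ (pf h ξ r (c * α') + ε - c * pf h ξ q' α') / a := by
    filter_upwards [hev1, self_mem_nhdsWithin] with s h1 h2
    have h3 := F1 hc ξ q q' ha.le hc0.le hac (h2 : (0:ℝ) < s) hα'
    rw [le_div_iff₀ ha]
    calc pf h ξ q s * a = a * pf h ξ q s + c * pf h ξ q' α' - c * pf h ξ q' α' := by ring
      _ ≤ pf h ξ r (a * s + c * α') - c * pf h ξ q' α' := by linarith
      _ ≤ pf h ξ r (c * α') + ε - c * pf h ξ q' α' := by linarith
  have h4 := persp_zero_le ξ hg hev2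
  rw [le_div_iff₀ ha] at h4
  linarith

include hc in
lemma perspP {a c α α' : ℝ} (q q' : Vec m) (ha : 0 ≤ a) (hc0 : 0 ≤ c) (hac : a + c = 1)
    (hα : 0 ≤ α) (hα' : 0 ≤ α') (hgq : α = 0 → genuine h ξ q)
    (hgq' : α' = 0 → genuine h ξ q') :
    a * persp h ξ q α + c * persp h ξ q' α' ≤ persp h ξ (a • q + c • q') (a * α + c * α') := by
  rcases ha.eq_or_lt with rfl | hapos
  · have hc1 : c = 1 := by linarith
    subst hc1
    simp only [zero_mul, zero_smul, zero_add, one_mul, one_smul, le_refl]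
  rcases hc0.eq_or_lt with rfl | hcpos
  · have ha1 : a = 1 := by linarith
    subst ha1
    simp only [zero_mul, zero_smul, add_zero, one_mul, one_smul, le_refl]
  rcases hα.eq_or_lt with rfl | hαpos
  · rcases hα'.eq_or_lt with rfl | hα'pos
    · -- both exponents zero
      rw [show a * (0:ℝ) + c * 0 = 0 by ring]
      have hgq := hgq rfl
      have hgq' := hgq' rfl
      refine le_of_eps (fun ε hε => ?_)
      have hev : ∀ᶠ s in nhdsWithin 0 (Set.Ioi 0),
          a * persp h ξ q 0 + c * persp h ξ q' 0 - ε ≤ pf h ξ (a • q + c • q') s := by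
        filter_upwards [persp_zero_sub_eventually ξ hgq hε,
          persp_zero_sub_eventually ξ hgq' hε, self_mem_nhdsWithin] with s h1 h2 hs
        have h3 := F1 hc ξ q q' hapos.le hcpos.le hac (hs : (0:ℝ) < s) (hs : (0:ℝ) < s)
        rw [show a * s + c * s = s by rw [← add_mul, hac, one_mul]] at h3
        nlinarith [mul_le_mul_of_nonneg_left h1 hapos.le,
          mul_le_mul_of_nonneg_left h2 hcpos.le]
      have := le_persp_zero hc ξ (a • q + c • q') hev
      linarith
    · rw [show a * (0:ℝ) + c * α' = c * α' by ring]
      exact perspP_mix hc ξ q q' hapos hcpos hac hα'pos (hgq rfl)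
  · rcases hα'.eq_or_lt with rfl | hα'pos
    · rw [show a * α + c * (0:ℝ) = a * α by ring, show a • q + c • q' = c • q' + a • q
        from add_comm _ _]
      have := perspP_mix hc ξ q' q hcpos hapos (by linarith) hαpos (hgq' rfl)
      linarith
    · have hcomb : 0 < a * α + c * α' := by positivity
      rw [persp_of_pos h ξ q hαpos, persp_of_pos h ξ q' hα'pos, persp_of_pos h ξ _ hcomb]
      exact F1 hc ξ q q' ha hc0 hac hαpos hα'pos

end PerspAux


open PerspAux

lemma sup_combo {S S' : Set ℝ} {a c z : ℝ} (ha : 0 ≤ a) (hc : 0 ≤ c)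
    (hS : S.Nonempty) (hS' : S'.Nonempty)
    (H : ∀ v ∈ S, ∀ w ∈ S', a * v + c * w ≤ z) :
    a * sSup S + c * sSup S' ≤ z := by
  obtain ⟨v0, hv0⟩ := hS
  obtain ⟨w0, hw0⟩ := hS'
  rcases ha.eq_or_lt with rfl | hapos
  · rcases hc.eq_or_lt with rfl | hcpos
    · have := H v0 hv0 w0 hw0
      simp only [zero_mul, add_zero]
      linarith
    · have h1 : sSup S' ≤ z / c := by
        refine csSup_le ⟨w0, hw0⟩ (fun w hw => ?_)
        have := H v0 hv0 w hw
        rw [le_div_iff₀ hcpos]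
        linarith
      calc (0:ℝ) * sSup S + c * sSup S' = c * sSup S' := by ring
        _ ≤ c * (z / c) := mul_le_mul_of_nonneg_left h1 hc
        _ = z := by field_simp
  · have h1 : sSup S ≤ (z - c * sSup S') / a := by
      refine csSup_le ⟨v0, hv0⟩ (fun v hv => ?_)
      rw [le_div_iff₀ hapos]
      rcases hc.eq_or_lt with rfl | hcpos
      · have := H v hv w0 hw0
        simp only [zero_mul] at *
        linarith
      · have h2 : sSup S' ≤ (z - a * v) / c := by
          refine csSup_le ⟨w0, hw0⟩ (fun w hw => ?_)
          rw [le_div_iff₀ hcpos]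
          have := H v hv w hw
          linarith
        have h3 : c * sSup S' ≤ z - a * v := by
          calc c * sSup S' ≤ c * ((z - a * v) / c) := mul_le_mul_of_nonneg_left h2 hc
            _ = z - a * v := by field_simp
        linarith
    have h4 : a * sSup S ≤ z - c * sSup S' := by
      calc a * sSup S ≤ a * ((z - c * sSup S') / a) := mul_le_mul_of_nonneg_left h1 ha
        _ = z - c * sSup S' := by field_simp
    linarith

lemma exists_ub_const {m : ℕ} {h : Vec m → ℝ} (hc : ConcaveOn ℝ Set.univ h) (ξ : Vec m)
    {b : ℝ} (hb : 0 ≤ b) :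
    ∃ C : ℝ, ∀ (q : Vec m) (α : ℝ), ‖q‖ ≤ b → 0 ≤ α → α ≤ 1 → persp h ξ q α ≤ C := by
  have hcont : Continuous (fun q : Vec m => ub h ξ q) := by
    refine continuous_const.max ?_
    exact (((cont_h hc).comp (continuous_const.sub continuous_id)).sub
      continuous_const).add continuous_const
  obtain ⟨x0, _, hx0⟩ := (isCompact_closedBall (0 : Vec m) b).exists_isMaxOn
    ⟨0, by simpa [Metric.mem_closedBall] using hb⟩ hcont.continuousOn
  refine ⟨ub h ξ x0, fun q α hq hα hα1 => ?_⟩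
  exact le_trans (persp_le hc ξ q hα hα1) (hx0 (mem_closedBall_zero_iff.mpr hq))

lemma Psi_nonempty {m : ℕ} (h₁ h₂ : Vec m → ℝ) (ξ : Vec m) (α β : ℝ × ℝ)
    (hβ1 : 0 ≤ β.1) (hβ2 : 0 ≤ β.2) :
    {v : ℝ | ∃ q₁ q₂ : Vec m, ‖q₁‖ ≤ β.1 ∧ ‖q₂‖ ≤ β.2 ∧
      v = persp h₁ ξ q₁ α.1 + persp h₂ ξ q₂ α.2}.Nonempty :=
  ⟨persp h₁ ξ 0 α.1 + persp h₂ ξ 0 α.2, 0, 0, by simpa using hβ1, by simpa using hβ2, rfl⟩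

lemma Psi_bddAbove {m : ℕ} {h₁ h₂ : Vec m → ℝ} (ξ : Vec m) {b : ℝ} {C₁ C₂ : ℝ}
    (hC₁ : ∀ (q : Vec m) (α : ℝ), ‖q‖ ≤ b → 0 ≤ α → α ≤ 1 → persp h₁ ξ q α ≤ C₁)
    (hC₂ : ∀ (q : Vec m) (α : ℝ), ‖q‖ ≤ b → 0 ≤ α → α ≤ 1 → persp h₂ ξ q α ≤ C₂)
    (α β : ℝ × ℝ) (hα1 : 0 ≤ α.1) (hα1' : α.1 ≤ 1) (hα2 : 0 ≤ α.2) (hα2' : α.2 ≤ 1)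
    (hβ1 : β.1 ≤ b) (hβ2 : β.2 ≤ b) :
    ∀ v ∈ {v : ℝ | ∃ q₁ q₂ : Vec m, ‖q₁‖ ≤ β.1 ∧ ‖q₂‖ ≤ β.2 ∧
      v = persp h₁ ξ q₁ α.1 + persp h₂ ξ q₂ α.2}, v ≤ C₁ + C₂ := by
  rintro v ⟨q₁, q₂, hq₁, hq₂, rfl⟩
  exact add_le_add (hC₁ q₁ α.1 (le_trans hq₁ hβ1) hα1 hα1')
    (hC₂ q₂ α.2 (le_trans hq₂ hβ2) hα2 hα2')

lemma Psi_le {m : ℕ} {h₁ h₂ : Vec m → ℝ} (ξ : Vec m) {b : ℝ} {C₁ C₂ : ℝ}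
    (hC₁ : ∀ (q : Vec m) (α : ℝ), ‖q‖ ≤ b → 0 ≤ α → α ≤ 1 → persp h₁ ξ q α ≤ C₁)
    (hC₂ : ∀ (q : Vec m) (α : ℝ), ‖q‖ ≤ b → 0 ≤ α → α ≤ 1 → persp h₂ ξ q α ≤ C₂)
    (α β : ℝ × ℝ) (hα1 : 0 ≤ α.1) (hα1' : α.1 ≤ 1) (hα2 : 0 ≤ α.2) (hα2' : α.2 ≤ 1)
    (hβ1 : 0 ≤ β.1) (hβ2 : 0 ≤ β.2) (hβ1' : β.1 ≤ b) (hβ2' : β.2 ≤ b) :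
    Psi h₁ h₂ ξ α β ≤ C₁ + C₂ :=
  csSup_le (Psi_nonempty h₁ h₂ ξ α β hβ1 hβ2)
    (Psi_bddAbove ξ hC₁ hC₂ α β hα1 hα1' hα2 hα2' hβ1' hβ2')

lemma norm_combo_le {m : ℕ} {a c bq bp : ℝ} (ha : 0 ≤ a) (hc : 0 ≤ c)
    {q p : Vec m} (hq : ‖q‖ ≤ bq) (hp : ‖p‖ ≤ bp) :
    ‖a • q + c • p‖ ≤ a * bq + c * bp := by
  calc ‖a • q + c • p‖ ≤ ‖a • q‖ + ‖c • p‖ := norm_add_le _ _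
    _ = a * ‖q‖ + c * ‖p‖ := by
        rw [norm_smul, norm_smul, Real.norm_eq_abs, Real.norm_eq_abs,
          abs_of_nonneg ha, abs_of_nonneg hc]
    _ ≤ a * bq + c * bp := by gcongr

set_option maxHeartbeats 1000000 in
lemma Psi_combo {m : ℕ} {h₁ h₂ : Vec m → ℝ}
    (hc₁ : ConcaveOn ℝ Set.univ h₁) (hc₂ : ConcaveOn ℝ Set.univ h₂)
    (ξ : Vec m) {b : ℝ} (hb : 0 ≤ b)
    (α α' β β' : ℝ × ℝ)
    (hα1 : 0 ≤ α.1) (hα2 : 0 ≤ α.2) (hαs : α.1 + α.2 = 1)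
    (hα'1 : 0 ≤ α'.1) (hα'2 : 0 ≤ α'.2) (hα's : α'.1 + α'.2 = 1)
    (hβ1 : 0 ≤ β.1) (hβ2 : 0 ≤ β.2) (hβs : β.1 + β.2 = b)
    (hβ'1 : 0 ≤ β'.1) (hβ'2 : 0 ≤ β'.2) (hβ's : β'.1 + β'.2 = b)
    (a c : ℝ) (ha : 0 ≤ a) (hc : 0 ≤ c) (hac : a + c = 1) :
    a * Psi h₁ h₂ ξ α β + c * Psi h₁ h₂ ξ α' β'
      ≤ Psi h₁ h₂ ξ (a • α + c • α') (a • β + c • β') := by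
  obtain ⟨C₁, hC₁⟩ := exists_ub_const hc₁ ξ hb
  obtain ⟨C₂, hC₂⟩ := exists_ub_const hc₂ ξ hb
  have hfst : (a • α + c • α').1 = a * α.1 + c * α'.1 := rfl
  have hsnd : (a • α + c • α').2 = a * α.2 + c * α'.2 := rfl
  have hbfst : (a • β + c • β').1 = a * β.1 + c * β'.1 := rfl
  have hbsnd : (a • β + c • β').2 = a * β.2 + c * β'.2 := rfl
  unfold Psi
  refine sup_combo ha hc (Psi_nonempty h₁ h₂ ξ α β hβ1 hβ2)
    (Psi_nonempty h₁ h₂ ξ α' β' hβ'1 hβ'2) ?_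
  rintro v ⟨q₁, q₂, hq₁, hq₂, rfl⟩ w ⟨p₁, p₂, hp₁, hp₂, rfl⟩
  obtain ⟨q₁', hn₁, he₁, hg₁⟩ := repair (h := h₁) ξ q₁ hα1
  obtain ⟨q₂', hn₂, he₂, hg₂⟩ := repair (h := h₂) ξ q₂ hα2
  obtain ⟨p₁', hm₁, hf₁, hh₁⟩ := repair (h := h₁) ξ p₁ hα'1
  obtain ⟨p₂', hm₂, hf₂, hh₂⟩ := repair (h := h₂) ξ p₂ hα'2
  have k₁ := perspP hc₁ ξ q₁' p₁' ha hc hac hα1 hα'1 hg₁ hh₁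
  have k₂ := perspP hc₂ ξ q₂' p₂' ha hc hac hα2 hα'2 hg₂ hh₂
  rw [he₁, hf₁] at k₁
  rw [he₂, hf₂] at k₂
  have hmem : persp h₁ ξ (a • q₁' + c • p₁') (a * α.1 + c * α'.1)
      + persp h₂ ξ (a • q₂' + c • p₂') (a * α.2 + c * α'.2)
      ∈ {v : ℝ | ∃ r₁ r₂ : Vec m, ‖r₁‖ ≤ (a • β + c • β').1 ∧ ‖r₂‖ ≤ (a • β + c • β').2 ∧
          v = persp h₁ ξ r₁ (a • α + c • α').1 + persp h₂ ξ r₂ (a • α + c • α').2} := by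
    refine ⟨a • q₁' + c • p₁', a • q₂' + c • p₂', ?_, ?_, by rw [hfst, hsnd]⟩
    · rw [hbfst]
      exact norm_combo_le ha hc (le_trans hn₁ hq₁) (le_trans hm₁ hp₁)
    · rw [hbsnd]
      exact norm_combo_le ha hc (le_trans hn₂ hq₂) (le_trans hm₂ hp₂)
  have hbdd : BddAbove {v : ℝ | ∃ r₁ r₂ : Vec m,
      ‖r₁‖ ≤ (a • β + c • β').1 ∧ ‖r₂‖ ≤ (a • β + c • β').2 ∧
      v = persp h₁ ξ r₁ (a • α + c • α').1 + persp h₂ ξ r₂ (a • α + c • α').2} := by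
    have e1 : α.1 ≤ 1 := by linarith
    have e2 : α.2 ≤ 1 := by linarith
    have e1' : α'.1 ≤ 1 := by linarith
    have e2' : α'.2 ≤ 1 := by linarith
    have f1 : β.1 ≤ b := by linarith
    have f2 : β.2 ≤ b := by linarith
    have f1' : β'.1 ≤ b := by linarith
    have f2' : β'.2 ≤ b := by linarith
    refine ⟨C₁ + C₂, fun v hv => Psi_bddAbove ξ hC₁ hC₂ _ _ ?_ ?_ ?_ ?_ ?_ ?_ v hv⟩
    · rw [hfst]; positivity
    · rw [hfst]
      nlinarith [mul_le_mul_of_nonneg_left e1 ha, mul_le_mul_of_nonneg_left e1' hc]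
    · rw [hsnd]; positivity
    · rw [hsnd]
      nlinarith [mul_le_mul_of_nonneg_left e2 ha, mul_le_mul_of_nonneg_left e2' hc]
    · rw [hbfst]
      nlinarith [mul_le_mul_of_nonneg_left f1 ha, mul_le_mul_of_nonneg_left f1' hc]
    · rw [hbsnd]
      nlinarith [mul_le_mul_of_nonneg_left f2 ha, mul_le_mul_of_nonneg_left f2' hc]
  have hle := le_csSup hbdd hmem
  linarith



set_option maxHeartbeats 1000000 in
/-- **Nested concavity of the pairwise value function** (Lemma 12).  For fixed weights `α`
in the simplex, `β ↦ Ψ(α, β)` is concave on the budget simplex `{β ≥ 0, β₁ + β₂ = b}`, and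
the partial maximum `α ↦ max_β Ψ(α, β)` is concave on the weight simplex. -/
theorem Psi_nested_concavity
    {m : ℕ} (h₁ h₂ : Vec m → ℝ)
    (hconc₁ : ConcaveOn ℝ Set.univ h₁) (hconc₂ : ConcaveOn ℝ Set.univ h₂)
    (ξhat : Vec m) (b : ℝ) (hb : 0 ≤ b) :
    (∀ α : ℝ × ℝ, 0 ≤ α.1 → 0 ≤ α.2 → α.1 + α.2 = 1 →
      ∀ β β' : ℝ × ℝ, 0 ≤ β.1 → 0 ≤ β.2 → β.1 + β.2 = b →
        0 ≤ β'.1 → 0 ≤ β'.2 → β'.1 + β'.2 = b →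
        ∀ a c : ℝ, 0 ≤ a → 0 ≤ c → a + c = 1 →
          a * Psi h₁ h₂ ξhat α β + c * Psi h₁ h₂ ξhat α β'
            ≤ Psi h₁ h₂ ξhat α (a • β + c • β')) ∧
    (∀ α α' : ℝ × ℝ, 0 ≤ α.1 → 0 ≤ α.2 → α.1 + α.2 = 1 →
      0 ≤ α'.1 → 0 ≤ α'.2 → α'.1 + α'.2 = 1 →
      ∀ a c : ℝ, 0 ≤ a → 0 ≤ c → a + c = 1 →
        a * sSup {v | ∃ β : ℝ × ℝ, 0 ≤ β.1 ∧ 0 ≤ β.2 ∧ β.1 + β.2 = b ∧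
              v = Psi h₁ h₂ ξhat α β}
          + c * sSup {v | ∃ β : ℝ × ℝ, 0 ≤ β.1 ∧ 0 ≤ β.2 ∧ β.1 + β.2 = b ∧
              v = Psi h₁ h₂ ξhat α' β}
          ≤ sSup {v | ∃ β : ℝ × ℝ, 0 ≤ β.1 ∧ 0 ≤ β.2 ∧ β.1 + β.2 = b ∧
              v = Psi h₁ h₂ ξhat (a • α + c • α') β}) := by
  obtain ⟨C₁, hC₁⟩ := exists_ub_const hconc₁ ξhat hb
  obtain ⟨C₂, hC₂⟩ := exists_ub_const hconc₂ ξhat hb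
  constructor
  · intro α hα1 hα2 hαs β β' hβ1 hβ2 hβs hβ'1 hβ'2 hβ's a c ha hc hac
    have hcombo : a • α + c • α = α := by rw [← add_smul, hac, one_smul]
    have hmain := Psi_combo hconc₁ hconc₂ ξhat hb α α β β' hα1 hα2 hαs hα1 hα2 hαs
      hβ1 hβ2 hβs hβ'1 hβ'2 hβ's a c ha hc hac
    rwa [hcombo] at hmain
  · intro α α' hα1 hα2 hαs hα'1 hα'2 hα's a c ha hc hac
    refine sup_combo ha hc
      ⟨Psi h₁ h₂ ξhat α (b, 0), (b, 0), hb, le_refl 0, by simp, rfl⟩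
      ⟨Psi h₁ h₂ ξhat α' (b, 0), (b, 0), hb, le_refl 0, by simp, rfl⟩ ?_
    rintro v ⟨β, hβ1, hβ2, hβs, rfl⟩ w ⟨β', hβ'1, hβ'2, hβ's, rfl⟩
    have h1 := Psi_combo hconc₁ hconc₂ ξhat hb α α' β β' hα1 hα2 hαs hα'1 hα'2 hα's
      hβ1 hβ2 hβs hβ'1 hβ'2 hβ's a c ha hc hac
    have hbf : (a • β + c • β').1 = a * β.1 + c * β'.1 := rfl
    have hbs : (a • β + c • β').2 = a * β.2 + c * β'.2 := rfl
    have haf : (a • α + c • α').1 = a * α.1 + c * α'.1 := rfl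
    have has : (a • α + c • α').2 = a * α.2 + c * α'.2 := rfl
    have hmem : Psi h₁ h₂ ξhat (a • α + c • α') (a • β + c • β')
        ∈ {v | ∃ β'' : ℝ × ℝ, 0 ≤ β''.1 ∧ 0 ≤ β''.2 ∧ β''.1 + β''.2 = b ∧
            v = Psi h₁ h₂ ξhat (a • α + c • α') β''} := by
      refine ⟨a • β + c • β', ?_, ?_, ?_, rfl⟩
      · rw [hbf]
        exact add_nonneg (mul_nonneg ha hβ1) (mul_nonneg hc hβ'1)
      · rw [hbs]
        exact add_nonneg (mul_nonneg ha hβ2) (mul_nonneg hc hβ'2)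
      · rw [hbf, hbs]
        linear_combination a * hβs + c * hβ's + b * hac
    refine le_trans h1 (le_csSup ⟨C₁ + C₂, ?_⟩ hmem)
    rintro v ⟨γ, hg1, hg2, hg3, rfl⟩
    have e1 : α.1 ≤ 1 := by linarith
    have e2 : α.2 ≤ 1 := by linarith
    have e1' : α'.1 ≤ 1 := by linarith
    have e2' : α'.2 ≤ 1 := by linarith
    refine Psi_le ξhat hC₁ hC₂ _ γ ?_ ?_ ?_ ?_ hg1 hg2 (by linarith) (by linarith)
    · rw [haf]
      exact add_nonneg (mul_nonneg ha hα1) (mul_nonneg hc hα'1)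
    · rw [haf]
      nlinarith [mul_le_mul_of_nonneg_left e1 ha, mul_le_mul_of_nonneg_left e1' hc]
    · rw [has]
      exact add_nonneg (mul_nonneg ha hα2) (mul_nonneg hc hα'2)
    · rw [has]
      nlinarith [mul_le_mul_of_nonneg_left e2 ha, mul_le_mul_of_nonneg_left e2' hc]
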